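/- Let L ∈ S be a non-minimal vertex. Then Σ_{I, J ∈ S_min : sup(I, J) = L} μ(I)μ(J) = μ(L)²(1 − p_L⁻¹). -/

import Mathlib

open scoped Classical

section Aux
variable {S : Type*} [Fintype S] [SemilatticeSup S]

lemma exists_cov_of_lt (x y : S) (h : y < x) : ∃ C, y ≤ C ∧ C ⋖ x := by
  obtain ⟨C, hC, hmax⟩ := Finset.exists_maximal
    (s := Finset.univ.filter (fun z => y ≤ z ∧ z < x)) ⟨y, by simp [h]⟩
  simp only [Finset.mem_filter, Finset.mem_univ, true_and] at hC
  exact ⟨C, hC.1, hC.2, fun z h1 h2 =>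
    h1.not_ge (hmax (y := z) (by simp [hC.1.trans h1.le, h2]) h1.le)⟩

lemma child_unique (hchain : ∀ x y z : S, x ≤ y → x ≤ z → y ≤ z ∨ z ≤ y)
    {x C C' w : S} (h1 : C ⋖ x) (h2 : C' ⋖ x) (hw1 : w ≤ C) (hw2 : w ≤ C') : C = C' := by
  rcases hchain w C C' hw1 hw2 with h | h
  · rcases h.lt_or_eq with hlt | he
    · exact absurd h2.1 (h1.2 hlt)
    · exact he
  · rcases h.lt_or_eq with hlt | he
    · exact absurd h1.1 (h2.2 hlt)
    · exact he.symm

lemma sum_min_le (hchain : ∀ x y z : S, x ≤ y → x ≤ z → y ≤ z ∨ z ≤ y)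
    (p : S → ℕ) (hp : ∀ L : S, ¬ IsMin L → 2 ≤ p L)
    (hcard : ∀ L : S, ¬ IsMin L →
      (Finset.univ.filter (fun J : S => J ⋖ L)).card = p L)
    (μ : S → ℝ) (hμ : ∀ L J : S, J ⋖ L → μ J = μ L / p L)
    (x : S) :
    ∑ I ∈ Finset.univ.filter (fun I : S => IsMin I ∧ I ≤ x), μ I = μ x := by
  induction x using WellFoundedLT.induction with
  | _ x ih =>
    by_cases hx : IsMin x
    · have : Finset.univ.filter (fun I : S => IsMin I ∧ I ≤ x) = {x} := by
        ext I
        simp only [Finset.mem_filter, Finset.mem_univ, true_and, Finset.mem_singleton]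
        constructor
        · rintro ⟨_, hle⟩; exact le_antisymm hle (hx hle)
        · rintro rfl; exact ⟨hx, le_rfl⟩
      rw [this, Finset.sum_singleton]
    · have hsplit : Finset.univ.filter (fun I : S => IsMin I ∧ I ≤ x) =
          (Finset.univ.filter (fun C : S => C ⋖ x)).biUnion
            (fun C => Finset.univ.filter (fun I : S => IsMin I ∧ I ≤ C)) := by
        ext I
        simp only [Finset.mem_biUnion, Finset.mem_filter, Finset.mem_univ, true_and]
        constructor
        · rintro ⟨hmin, hle⟩
          have hlt : I < x := lt_of_le_of_ne hle (by rintro rfl; exact hx hmin)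
          obtain ⟨C, hIC, hC⟩ := exists_cov_of_lt x I hlt
          exact ⟨C, hC, hmin, hIC⟩
        · rintro ⟨C, hC, hmin, hIC⟩
          exact ⟨hmin, hIC.trans hC.1.le⟩
      have hdisj : ∀ C ∈ Finset.univ.filter (fun C : S => C ⋖ x),
          ∀ C' ∈ Finset.univ.filter (fun C : S => C ⋖ x), C ≠ C' →
          Disjoint (Finset.univ.filter (fun I : S => IsMin I ∧ I ≤ C))
                   (Finset.univ.filter (fun I : S => IsMin I ∧ I ≤ C')) := by
        intro C hC C' hC' hne
        simp only [Finset.mem_filter, Finset.mem_univ, true_and] at hC hC'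
        rw [Finset.disjoint_left]
        intro I hI hI'
        simp only [Finset.mem_filter, Finset.mem_univ, true_and] at hI hI'
        exact hne (child_unique hchain hC hC' hI.2 hI'.2)
      rw [hsplit, Finset.sum_biUnion hdisj]
      have hpx : (p x : ℝ) ≠ 0 := by
        have := hp x hx; positivity
      calc ∑ C ∈ Finset.univ.filter (fun C : S => C ⋖ x),
              ∑ I ∈ Finset.univ.filter (fun I : S => IsMin I ∧ I ≤ C), μ I
          = ∑ C ∈ Finset.univ.filter (fun C : S => C ⋖ x), μ x / p x := by
            refine Finset.sum_congr rfl fun C hC => ?_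
            simp only [Finset.mem_filter, Finset.mem_univ, true_and] at hC
            rw [ih C hC.1, hμ x C hC]
        _ = μ x := by
            rw [Finset.sum_const, hcard x hx, nsmul_eq_mul]
            field_simp

end Aux

/-- In a finite directed tree `S` (finite partial order with greatest element `K`,
binary suprema, totally ordered up-sets), where every non-minimal vertex `L`
has exactly `p L ≥ 2` children and the weight `μ` satisfies `μ K > 0` and
`μ J = μ L / p L` for every child `J` of `L`: if `L` is non-minimal, then
`Σ_{I,J ∈ S_min : sup(I,J) = L} μ(I) μ(J) = μ(L)² (1 − p_L⁻¹)`. -/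
theorem double_sum_min_weights_sup_eq
    {S : Type*} [Fintype S] [SemilatticeSup S]
    (K : S) (hK : ∀ x : S, x ≤ K)
    (hchain : ∀ x y z : S, x ≤ y → x ≤ z → y ≤ z ∨ z ≤ y)
    (p : S → ℕ) (hp : ∀ L : S, ¬ IsMin L → 2 ≤ p L)
    (hcard : ∀ L : S, ¬ IsMin L →
      (Finset.univ.filter (fun J : S => J ⋖ L)).card = p L)
    (μ : S → ℝ) (hμK : 0 < μ K)
    (hμ : ∀ L J : S, J ⋖ L → μ J = μ L / p L)
    (L : S) (hL : ¬ IsMin L) :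
    ∑ I ∈ Finset.univ.filter (fun I : S => IsMin I),
      ∑ J ∈ Finset.univ.filter (fun J : S => IsMin J ∧ I ⊔ J = L),
        μ I * μ J = μ L ^ 2 * (1 - (p L : ℝ)⁻¹) := by
  set A := Finset.univ.filter (fun I : S => IsMin I ∧ I ≤ L) with hA
  set ch := Finset.univ.filter (fun C : S => C ⋖ L) with hch
  have hmemA : ∀ I : S, I ∈ A ↔ IsMin I ∧ I ≤ L := by
    intro I; simp [hA]
  have hsumA : ∑ I ∈ A, μ I = μ L := sum_min_le hchain p hp hcard μ hμ L
  have hsumC : ∀ C ∈ ch, ∑ I ∈ A.filter (fun I => I ≤ C), μ I = μ C := by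
    intro C hC
    simp only [hch, Finset.mem_filter, Finset.mem_univ, true_and] at hC
    have : A.filter (fun I => I ≤ C) =
        Finset.univ.filter (fun I : S => IsMin I ∧ I ≤ C) := by
      ext I
      simp only [hA, Finset.filter_filter, Finset.mem_filter, Finset.mem_univ, true_and]
      exact ⟨fun ⟨⟨h1, _⟩, h3⟩ => ⟨h1, h3⟩, fun ⟨h1, h3⟩ => ⟨⟨h1, h3.trans hC.1.le⟩, h3⟩⟩
    rw [this]
    exact sum_min_le hchain p hp hcard μ hμ C
  -- step 1: restrict outer/inner sums to A
  have step1 : ∑ I ∈ Finset.univ.filter (fun I : S => IsMin I),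
      ∑ J ∈ Finset.univ.filter (fun J : S => IsMin J ∧ I ⊔ J = L), μ I * μ J
      = ∑ I ∈ A, ∑ J ∈ A, if I ⊔ J = L then μ I * μ J else 0 := by
    have hAsub : A ⊆ Finset.univ.filter (fun I : S => IsMin I) := by
      intro I hI; rw [hmemA] at hI; simp [hI.1]
    rw [← Finset.sum_subset hAsub]
    · refine Finset.sum_congr rfl fun I hI => ?_
      have hinner : Finset.univ.filter (fun J : S => IsMin J ∧ I ⊔ J = L) =
          A.filter (fun J => I ⊔ J = L) := by
        ext J
        simp only [hA, Finset.filter_filter, Finset.mem_filter, Finset.mem_univ, true_and]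
        constructor
        · rintro ⟨h1, h2⟩; exact ⟨⟨h1, h2 ▸ le_sup_right⟩, h2⟩
        · rintro ⟨⟨h1, _⟩, h2⟩; exact ⟨h1, h2⟩
      rw [hinner, Finset.sum_filter]
    · intro I hI hIA
      simp only [Finset.mem_filter, Finset.mem_univ, true_and] at hI
      rw [hmemA] at hIA
      have : Finset.univ.filter (fun J : S => IsMin J ∧ I ⊔ J = L) = ∅ := by
        rw [Finset.filter_eq_empty_iff]
        rintro J _ ⟨_, h2⟩
        exact hIA ⟨hI, h2 ▸ le_sup_left⟩
      simp [this]
  rw [step1]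
  -- split by I ⊔ J = L or not
  have step2 : ∑ I ∈ A, ∑ J ∈ A, (if I ⊔ J = L then μ I * μ J else 0)
      = (∑ I ∈ A, ∑ J ∈ A, μ I * μ J)
        - ∑ I ∈ A, ∑ J ∈ A, (if I ⊔ J ≠ L then μ I * μ J else 0) := by
    rw [eq_sub_iff_add_eq, ← Finset.sum_add_distrib]
    refine Finset.sum_congr rfl fun I _ => ?_
    rw [← Finset.sum_add_distrib]
    refine Finset.sum_congr rfl fun J _ => ?_
    by_cases h : I ⊔ J = L <;> simp [h]
  rw [step2]
  have hfull : ∑ I ∈ A, ∑ J ∈ A, μ I * μ J = μ L ^ 2 := by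
    rw [← Finset.sum_mul_sum, hsumA, sq]
  -- the "not L" part
  have hne : ∑ I ∈ A, ∑ J ∈ A, (if I ⊔ J ≠ L then μ I * μ J else 0)
      = ∑ C ∈ ch, μ C ^ 2 := by
    have hrw : ∑ I ∈ A, ∑ J ∈ A, (if I ⊔ J ≠ L then μ I * μ J else 0)
        = ∑ q ∈ (A ×ˢ A).filter (fun q : S × S => q.1 ⊔ q.2 ≠ L), μ q.1 * μ q.2 := by
      conv_rhs => rw [Finset.sum_filter, Finset.sum_product]
    rw [hrw]
    have hset : (A ×ˢ A).filter (fun q : S × S => q.1 ⊔ q.2 ≠ L)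
        = ch.biUnion (fun C => (A.filter (fun I => I ≤ C)) ×ˢ (A.filter (fun I => I ≤ C))) := by
      ext ⟨I, J⟩
      simp only [Finset.mem_biUnion, Finset.mem_filter, Finset.mem_product, hch,
        Finset.mem_univ, true_and]
      constructor
      · rintro ⟨⟨hI, hJ⟩, hne⟩
        rw [hmemA] at hI hJ
        have hlt : I ⊔ J < L := lt_of_le_of_ne (sup_le hI.2 hJ.2) hne
        obtain ⟨C, hle, hC⟩ := exists_cov_of_lt L (I ⊔ J) hlt
        exact ⟨C, hC, ⟨(hmemA I).2 hI, le_sup_left.trans hle⟩,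
          ⟨(hmemA J).2 hJ, le_sup_right.trans hle⟩⟩
      · rintro ⟨C, hC, ⟨hI, hIC⟩, ⟨hJ, hJC⟩⟩
        refine ⟨⟨hI, hJ⟩, ?_⟩
        intro heq
        exact absurd (heq ▸ sup_le hIC hJC) (not_le_of_gt hC.1)
    rw [hset, Finset.sum_biUnion]
    · refine Finset.sum_congr rfl fun C hC => ?_
      rw [Finset.sum_product]
      simp_rw [← Finset.sum_mul_sum]
      rw [hsumC C hC, sq]
    · intro C hC C' hC' hCC'
      simp only [Finset.coe_filter, Set.mem_setOf_eq, Finset.mem_univ, true_and,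
        hch, Finset.mem_coe, Finset.mem_filter] at hC hC'
      simp only [Function.onFun]
      rw [Finset.disjoint_left]
      rintro ⟨I, J⟩ h1 h2
      simp only [Finset.mem_product, Finset.mem_filter] at h1 h2
      exact hCC' (child_unique hchain hC hC'
        (sup_le h1.1.2 h1.2.2) (sup_le h2.1.2 h2.2.2))
  rw [hfull, hne]
  have hsumC2 : ∑ C ∈ ch, μ C ^ 2 = μ L ^ 2 / p L := by
    have hpL : (p L : ℝ) ≠ 0 := by have := hp L hL; positivity
    calc ∑ C ∈ ch, μ C ^ 2 = ∑ C ∈ ch, (μ L / p L) ^ 2 := by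
          refine Finset.sum_congr rfl fun C hC => ?_
          simp only [hch, Finset.mem_filter, Finset.mem_univ, true_and] at hC
          rw [hμ L C hC]
      _ = μ L ^ 2 / p L := by
          rw [Finset.sum_const]
          have : ch.card = p L := hcard L hL
          rw [this, nsmul_eq_mul]
          field_simp
  rw [hsumC2]
  have hpL : (p L : ℝ) ≠ 0 := by have := hp L hL; positivity
  field_simp
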